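/- In the 2×2 quaternion matrices, let G₁ = diag(√2, 0), G₂ = diag(0, √2), E₁₂ = [[0,1],[−1,0]]. Let x₁, x₂ be real with 0 < x₁ and x₁ ≠ x₂, let c, d be real, and let Z = α·iG₁ + β·iG₂ + γ·jG₂ + δ·kG₂ with α, β, γ, δ ∈ ℝ. Suppose [Z, d·jG₁] = 0 and [Z, c·E₁₂] = ((x₂−x₁)/x₁)·[d·jG₁, c·E₁₂]. Then: (1) if c = 0 and d ≠ 0, then α = 0, so Z = β·iG₂ + γ·jG₂ + δ·kG₂; (2) if d = 0 and c ≠ 0, then γ = δ = 0 and β = α, so Z = α(iG₁ + iG₂); (3) if c ≠ 0 and d ≠ 0, then α = β = δ = 0 and γ = −((x₂−x₁)/x₁)d, so Z = −((x₂−x₁)/x₁)d·jG₂. -/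

import Mathlib

open Quaternion Matrix

/-- The quaternion unit `i`. -/
noncomputable def qi : ℍ[ℝ] := ⟨0, 1, 0, 0⟩
/-- The quaternion unit `j`. -/
noncomputable def qj : ℍ[ℝ] := ⟨0, 0, 1, 0⟩
/-- The quaternion unit `k`. -/
noncomputable def qk : ℍ[ℝ] := ⟨0, 0, 0, 1⟩

/-- `G₁ = diag(√2, 0)`. -/
noncomputable def G₁ : Matrix (Fin 2) (Fin 2) ℍ[ℝ] := !![((Real.sqrt 2 : ℝ) : ℍ[ℝ]), 0; 0, 0]
/-- `G₂ = diag(0, √2)`. -/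
noncomputable def G₂ : Matrix (Fin 2) (Fin 2) ℍ[ℝ] := !![0, 0; 0, ((Real.sqrt 2 : ℝ) : ℍ[ℝ])]
/-- `E₁₂ = [[0,1],[−1,0]]`. -/
noncomputable def E₁₂ : Matrix (Fin 2) (Fin 2) ℍ[ℝ] := !![0, 1; -1, 0]

/-- Lemma `lem3` of the paper: the form of the `h`-component `Z` of a
geodesic vector `W = X + Y + Z` on `Sp(2)/U(1)·Sp(1)`. -/
theorem stmt_10 (x₁ x₂ c d α β γ δ : ℝ)
    (hx₁ : 0 < x₁) (hx : x₁ ≠ x₂)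
    (Z : Matrix (Fin 2) (Fin 2) ℍ[ℝ])
    (hZ : Z = α • (qi • G₁) + β • (qi • G₂) + γ • (qj • G₂) + δ • (qk • G₂))
    (h1 : Z * (d • (qj • G₁)) - (d • (qj • G₁)) * Z = 0)
    (h2 : Z * (c • E₁₂) - (c • E₁₂) * Z =
      ((x₂ - x₁) / x₁) • ((d • (qj • G₁)) * (c • E₁₂) - (c • E₁₂) * (d • (qj • G₁)))) :
    (c = 0 → d ≠ 0 → α = 0 ∧ Z = β • (qi • G₂) + γ • (qj • G₂) + δ • (qk • G₂)) ∧
    (d = 0 → c ≠ 0 → γ = 0 ∧ δ = 0 ∧ β = α ∧ Z = α • (qi • G₁ + qi • G₂)) ∧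
    (c ≠ 0 → d ≠ 0 → α = 0 ∧ β = 0 ∧ δ = 0 ∧ γ = -((x₂ - x₁) / x₁) * d ∧
      Z = (-((x₂ - x₁) / x₁) * d) • (qj • G₂)) := by
  subst hZ
  have s2 : Real.sqrt 2 ≠ 0 := by positivity
  have e1 := congrFun (congrFun h1 0) 0
  have e2 := congrFun (congrFun h2 0) 1
  simp only [Matrix.mul_apply, Fin.sum_univ_two, Matrix.smul_apply, Matrix.sub_apply, Matrix.add_apply, smul_eq_mul] at e1 e2
  simp [G₁, G₂, E₁₂, Quaternion.ext_iff, Quaternion.re_mul, Quaternion.imI_mul, Quaternion.imJ_mul, Quaternion.imK_mul] at e1 e2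
  simp [Matrix.mul_apply, Fin.sum_univ_two, qi, qj, qk, G₁, G₂, E₁₂, Matrix.smul_apply,
    Quaternion.ext_iff, smul_mul_assoc] at e1 e2
  obtain ⟨ea, eb, ec⟩ := e2
  clear h1 h2
  have had : α * d = 0 := by linarith
  have hab : c * (α - β) = 0 := by
    have : (c * (α - β)) * Real.sqrt 2 = 0 := by ring_nf; ring_nf at ea; linarith
    rcases mul_eq_zero.1 this with h | h
    · exact h
    · exact absurd h s2
  have hg : c * (γ + (x₂ - x₁) / x₁ * d) = 0 := by
    have : (c * (γ + (x₂ - x₁) / x₁ * d)) * Real.sqrt 2 = 0 := by ring_nf; ring_nf at eb; linarith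
    rcases mul_eq_zero.1 this with h | h
    · exact h
    · exact absurd h s2
  refine ⟨?_, ?_, ?_⟩
  · intro hc hd
    have hα : α = 0 := by rcases mul_eq_zero.1 had with h | h; exact h; exact absurd h hd
    subst hα; simp
  · intro hd hc
    have hδ : δ = 0 := ec.resolve_left hc
    have hβ : β = α := by
      have := mul_eq_zero.1 hab
      rcases this with h | h; exact absurd h hc; linarith
    have hγ : γ = 0 := by
      rcases mul_eq_zero.1 hg with h | h; exact absurd h hc
      rw [hd] at h; simpa using h
    subst hδ hβ hγ hd
    simp [smul_add]
  · intro hc hd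
    have hα : α = 0 := by rcases mul_eq_zero.1 had with h | h; exact h; exact absurd h hd
    have hβ : β = 0 := by
      rcases mul_eq_zero.1 hab with h | h; exact absurd h hc; linarith [hα]
    have hδ : δ = 0 := ec.resolve_left hc
    have hγ : γ = -((x₂ - x₁) / x₁) * d := by
      rcases mul_eq_zero.1 hg with h | h; exact absurd h hc; linarith
    refine ⟨hα, hβ, hδ, hγ, ?_⟩
    rw [hα, hβ, hδ, hγ]
    simp only [zero_smul, zero_add, add_zero]
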